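/- Let V ⪰ W ≻ 0 be symmetric positive definite m×m matrices and Θ ∈ ℝ^{m×n}. Then ‖V^{1/2}Θ‖²_F ≤ (det(V)/det(W)) · ‖W^{1/2}Θ‖²_F. -/

import Mathlib

open Matrix

private lemma eig_ge_one {m : ℕ} {S : Matrix (Fin m) (Fin m) ℝ} (hS : S.IsHermitian)
    (h1 : (S - 1).PosSemidef) (i : Fin m) : 1 ≤ hS.eigenvalues i := by
  have hv := hS.mulVec_eigenvectorBasis i
  set v : Fin m → ℝ := ⇑(hS.eigenvectorBasis i) with hvdef
  have hnorm : dotProduct v v = 1 := by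
    have h := hS.eigenvectorBasis.orthonormal.1 i
    have : (inner ℝ (hS.eigenvectorBasis i) (hS.eigenvectorBasis i) : ℝ) = 1 := by
      rw [real_inner_self_eq_norm_sq, h]; norm_num
    simp only [PiLp.inner_apply, RCLike.inner_apply, conj_trivial] at this
    simpa [PiLp.inner_apply, dotProduct, RCLike.inner_apply, mul_comm] using this
  have h0 := h1.dotProduct_mulVec_nonneg v
  rw [sub_mulVec, one_mulVec, hv] at h0
  simp only [star_trivial, dotProduct_sub, dotProduct_smul, smul_eq_mul, hnorm] at h0
  linarith

private lemma det_smul_one_sub_posSemidef {m : ℕ} {S : Matrix (Fin m) (Fin m) ℝ}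
    (hS : S.IsHermitian) (hle : ∀ i, hS.eigenvalues i ≤ S.det) :
    (S.det • (1 : Matrix (Fin m) (Fin m) ℝ) - S).PosSemidef := by
  set U : Matrix (Fin m) (Fin m) ℝ := (hS.eigenvectorUnitary : Matrix (Fin m) (Fin m) ℝ) with hU
  have hUU : U * star U = 1 := mem_unitaryGroup_iff.mp hS.eigenvectorUnitary.2
  have hdiag : (Matrix.diagonal (fun i => S.det - hS.eigenvalues i)).PosSemidef :=
    PosSemidef.diagonal (fun i => sub_nonneg.mpr (hle i))
  have key : S.det • (1 : Matrix (Fin m) (Fin m) ℝ) - S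
      = U * Matrix.diagonal (fun i => S.det - hS.eigenvalues i) * star U := by
    have hspec := hS.spectral_theorem
    rw [Unitary.conjStarAlgAut_apply, ← hU] at hspec
    have : (Matrix.diagonal (fun i => S.det - hS.eigenvalues i))
        = S.det • 1 - Matrix.diagonal (RCLike.ofReal ∘ hS.eigenvalues) := by
      rw [← Matrix.diagonal_one, ← Matrix.diagonal_smul, ← Matrix.diagonal_sub]
      congr 1
      ext i
      simp [Matrix.one_apply, Matrix.diagonal, apply_ite]
      split_ifs with h <;> intro h2 <;> first | exact (h2 h).elim | exact (h h2).elim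
    rw [this, Matrix.mul_sub, Matrix.sub_mul, ← hspec]
    congr 1
    rw [Matrix.mul_smul, Matrix.smul_mul, Matrix.mul_one, hUU]
  rw [key]
  exact hdiag.mul_mul_conjTranspose_same U

private lemma trace_nonneg_of_posSemidef {k : ℕ} {M : Matrix (Fin k) (Fin k) ℝ}
    (hM : M.PosSemidef) : 0 ≤ M.trace := by
  rw [Matrix.trace]
  apply Finset.sum_nonneg
  intro i _
  have h := hM.dotProduct_mulVec_nonneg (Pi.single i 1)
  simpa [Matrix.diag, Matrix.mulVec_single, single_dotProduct] using h

/-- if `V ⪰ W ≻ 0` then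
`‖V^{1/2}Θ‖²_F = tr(Θᵀ V Θ) ≤ (det V / det W) tr(Θᵀ W Θ) = (det V / det W) ‖W^{1/2}Θ‖²_F`. -/
theorem weighted_frobenius_det_bound {m n : ℕ}
    (V W : Matrix (Fin m) (Fin m) ℝ) (hW : W.PosDef) (hVW : (V - W).PosSemidef)
    (Θ : Matrix (Fin m) (Fin n) ℝ) :
    (Θᵀ * V * Θ).trace ≤ (V.det / W.det) * (Θᵀ * W * Θ).trace := by
  have hdetW : 0 < W.det := hW.det_pos
  obtain ⟨R, hRps, hRR⟩ : ∃ R : Matrix (Fin m) (Fin m) ℝ, R.PosSemidef ∧ R * R = W :=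
    by open scoped MatrixOrder in exact ⟨CFC.sqrt W, (CFC.sqrt_nonneg W).posSemidef, CFC.sqrt_mul_sqrt_self W hW.posSemidef.nonneg⟩
  have hdetR : R.det * R.det = W.det := by rw [← Matrix.det_mul, hRR]
  have hdetRne : R.det ≠ 0 := by
    intro h; rw [h, mul_zero] at hdetR; exact hdetW.ne' hdetR.symm
  have hdetRunit : IsUnit R.det := isUnit_iff_ne_zero.mpr hdetRne
  have hRinv : R⁻¹ * R = 1 := Matrix.nonsing_inv_mul R hdetRunit
  have hRinv' : R * R⁻¹ = 1 := Matrix.mul_nonsing_inv R hdetRunit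
  have hRH : Rᴴ = R := hRps.1
  have hRinvH : (R⁻¹)ᴴ = R⁻¹ := by rw [Matrix.conjTranspose_nonsing_inv, hRH]
  have hVH : V.IsHermitian := by
    have := hVW.1.add hW.1
    simpa using this
  set S : Matrix (Fin m) (Fin m) ℝ := R⁻¹ * V * R⁻¹ with hSdef
  have hS : S.IsHermitian := by
    have : Sᴴ = S := by
      rw [hSdef, Matrix.conjTranspose_mul, Matrix.conjTranspose_mul, hRinvH, hVH.eq,
        Matrix.mul_assoc]
    exact this
  have hS1 : (S - 1).PosSemidef := by
    have h1 : R⁻¹ * W * R⁻¹ = 1 := by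
      rw [← hRR, ← Matrix.mul_assoc, Matrix.mul_assoc (R⁻¹ * R), hRinv, hRinv', Matrix.mul_one]
    have h2 : S - 1 = (R⁻¹)ᴴ * (V - W) * R⁻¹ := by
      rw [hRinvH, Matrix.mul_sub, Matrix.sub_mul, h1, hSdef]
    rw [h2]
    exact hVW.conjTranspose_mul_mul_same (R⁻¹)
  have hdetS : S.det = V.det / W.det := by
    rw [hSdef, Matrix.det_mul, Matrix.det_mul, Matrix.det_nonsing_inv,
      Ring.inverse_eq_inv]
    field_simp
    rw [← hdetR]; ring
  have heig : ∀ i, 1 ≤ hS.eigenvalues i := eig_ge_one hS hS1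
  have hle : ∀ i, hS.eigenvalues i ≤ S.det := by
    intro j
    have hprod : S.det = ∏ i, hS.eigenvalues i := by
      have := hS.det_eq_prod_eigenvalues
      simpa using this
    rw [hprod, ← Finset.mul_prod_erase Finset.univ _ (Finset.mem_univ j)]
    have h1 : (1 : ℝ) ≤ ∏ i ∈ Finset.univ.erase j, hS.eigenvalues i := by
      calc (1:ℝ) = ∏ _i ∈ Finset.univ.erase j, (1:ℝ) := by simp
      _ ≤ _ := Finset.prod_le_prod (fun i _ => zero_le_one) (fun i _ => heig i)
    nlinarith [heig j]
  have hkey : (S.det • (1 : Matrix (Fin m) (Fin m) ℝ) - S).PosSemidef :=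
    det_smul_one_sub_posSemidef hS hle
  have hconj : (S.det • W - V).PosSemidef := by
    have h := hkey.mul_mul_conjTranspose_same R
    have heq : R * (S.det • (1 : Matrix (Fin m) (Fin m) ℝ) - S) * Rᴴ = S.det • W - V := by
      rw [hRH, Matrix.mul_sub, Matrix.sub_mul]
      congr 1
      · rw [Matrix.mul_smul, Matrix.smul_mul, Matrix.mul_one, hRR]
      · rw [hSdef, ← Matrix.mul_assoc, ← Matrix.mul_assoc, hRinv', Matrix.one_mul,
          Matrix.mul_assoc, hRinv, Matrix.mul_one]
    rwa [heq] at h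
  have hfinal : (Θᴴ * (S.det • W - V) * Θ).PosSemidef := hconj.conjTranspose_mul_mul_same Θ
  have htr : 0 ≤ (Θᴴ * (S.det • W - V) * Θ).trace := trace_nonneg_of_posSemidef hfinal
  have hΘ : Θᴴ = Θᵀ := Matrix.conjTranspose_eq_transpose_of_trivial Θ
  rw [hΘ, Matrix.mul_sub, Matrix.sub_mul, Matrix.trace_sub, Matrix.mul_smul,
    Matrix.smul_mul, Matrix.trace_smul, smul_eq_mul] at htr
  rw [← hdetS]
  linarith
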